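/- The weighted empirical τ-quantile of finitely many Lipschitz functions is Lipschitz: if g₁, …, g_N : ℝⁿ → ℝ are each L-Lipschitz and w₁,…,w_N > 0 sum to 1, then Q(x) = inf{t : Σᵢ wᵢ·1{gᵢ(x) ≤ t} ≥ τ} is L-Lipschitz on ℝⁿ. -/
import Mathlib


theorem stmt_15 {n N : ℕ} (g : Fin N → EuclideanSpace ℝ (Fin n) → ℝ)
    (L : NNReal) (hg : ∀ i, LipschitzWith L (g i))
    (w : Fin N → ℝ) (hw : ∀ i, 0 < w i) (hsum : ∑ i, w i = 1)
    (τ : ℝ) (hτ : τ ∈ Set.Ioo (0 : ℝ) 1) :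
    LipschitzWith L (fun x => sInf {t : ℝ | τ ≤ ∑ i, if g i x ≤ t then w i else 0}) := by
  obtain ⟨hτ0, hτ1⟩ := hτ
  rcases Nat.eq_zero_or_pos N with hN | hN
  · subst hN; simp at hsum
  have hNe : Nonempty (Fin N) := ⟨⟨0, hN⟩⟩
  have huniv : (Finset.univ : Finset (Fin N)).Nonempty := Finset.univ_nonempty
  set S : EuclideanSpace ℝ (Fin n) → Set ℝ :=
    fun x => {t : ℝ | τ ≤ ∑ i, if g i x ≤ t then w i else 0} with hS
  have hne : ∀ x, (S x).Nonempty := by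
    intro x
    refine ⟨Finset.univ.sup' huniv (fun i => g i x), ?_⟩
    have h1 : ∀ i : Fin N, g i x ≤ Finset.univ.sup' huniv (fun i => g i x) :=
      fun i => Finset.le_sup' (fun i => g i x) (Finset.mem_univ i)
    simp only [hS, Set.mem_setOf_eq]
    rw [Finset.sum_congr rfl (fun i _ => if_pos (h1 i)), hsum]
    exact le_of_lt hτ1
  have hbdd : ∀ x, BddBelow (S x) := by
    intro x
    refine ⟨Finset.univ.inf' huniv (fun i => g i x), fun t ht => ?_⟩
    by_contra h
    push_neg at h
    have h2 : ∀ i : Fin N, ¬ g i x ≤ t := fun i =>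
      not_le.mpr (lt_of_lt_of_le h (Finset.inf'_le _ (Finset.mem_univ i)))
    simp only [hS, Set.mem_setOf_eq] at ht
    rw [Finset.sum_congr rfl (fun i _ => if_neg (h2 i))] at ht
    simp at ht
    linarith
  apply LipschitzWith.of_le_add_mul
  intro x y
  rw [← sub_le_iff_le_add]
  apply le_csInf (hne y)
  intro t ht
  rw [sub_le_iff_le_add]
  apply csInf_le (hbdd x)
  simp only [hS, Set.mem_setOf_eq] at ht ⊢
  refine le_trans ht (Finset.sum_le_sum fun i _ => ?_)
  split_ifs with h1 h2 h2
  · exact le_refl _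
  · exfalso
    apply h2
    have hd : dist (g i x) (g i y) ≤ (L : ℝ) * dist x y := (hg i).dist_le_mul x y
    rw [Real.dist_eq] at hd
    have := (abs_le.mp hd).2
    linarith
  · exact le_of_lt (hw i)
  · exact le_refl _
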